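/- Let φ be a positive linear map on D×D matrices with no nonzero positive semi-definite matrix in ker φ or ker φ*, and let φ' be a strictly positive linear map (mapping nonzero positive semi-definite matrices to positive definite ones). Then both compositions φ∘φ' and φ'∘φ are strictly positive. -/

import Mathlib

open Matrix
open scoped ComplexOrder

variable {D : ℕ}

open scoped MatrixOrder in
lemma psd_sqrt_aux {B : Matrix (Fin D) (Fin D) ℂ} (hB : B.PosSemidef) :
    ∃ S : Matrix (Fin D) (Fin D) ℂ, S * S = B ∧ Sᴴ = S := by
  obtain ⟨X, hX, -, hXX⟩ :=
    CFC.exists_sqrt_of_isSelfAdjoint_of_quasispectrumRestricts hB.isHermitian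
      (QuasispectrumRestricts.nnreal_of_nonneg hB.nonneg)
  exact ⟨X, hXX, hX.star_eq⟩

lemma psd_factor {A : Matrix (Fin D) (Fin D) ℂ} (hA : A.PosSemidef) :
    ∃ X : Matrix (Fin D) (Fin D) ℂ, A = Xᴴ * X := by
  obtain ⟨S, hSS, hSh⟩ := psd_sqrt_aux hA
  exact ⟨S, by rw [hSh, hSS]⟩

lemma trace_nonneg_of_psd {A : Matrix (Fin D) (Fin D) ℂ} (hA : A.PosSemidef) :
    0 ≤ A.trace := by
  rw [Matrix.trace]
  apply Finset.sum_nonneg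
  intro i _
  have := hA.dotProduct_mulVec_nonneg (Pi.single i 1)
  simpa [Matrix.mulVec_single, dotProduct, Pi.single_apply, Matrix.diag] using this

lemma frob_zero {B : Matrix (Fin D) (Fin D) ℂ} (h : (Bᴴ * B).trace = 0) : B = 0 := by
  have hdiag : ∀ j, (Bᴴ * B) j j = 0 := by
    have hd : ∀ j, 0 ≤ (Bᴴ * B) j j := fun j => by
      have := (Matrix.posSemidef_conjTranspose_mul_self B).dotProduct_mulVec_nonneg (Pi.single j 1)
      simpa [Matrix.mulVec_single, dotProduct, Pi.single_apply] using this
    intro j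
    exact (Finset.sum_eq_zero_iff_of_nonneg (fun j _ => hd j)).mp h j (Finset.mem_univ j)
  ext i j
  have h2 : ∀ i, star (B i j) * B i j = 0 := by
    have : (∑ k, star (B k j) * B k j) = 0 := by
      simpa [Matrix.mul_apply, Matrix.conjTranspose_apply] using hdiag j
    intro i
    exact (Finset.sum_eq_zero_iff_of_nonneg (fun k _ => star_mul_self_nonneg (B k j))).mp
      this i (Finset.mem_univ i)
  show B i j = 0
  rcases mul_eq_zero.mp (h2 i) with h' | h'
  · simpa using congrArg star h'
  · exact h'

lemma psd_trace_zero {A : Matrix (Fin D) (Fin D) ℂ} (hA : A.PosSemidef)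
    (h : A.trace = 0) : A = 0 := by
  obtain ⟨B, rfl⟩ := psd_factor hA
  rw [frob_zero h, Matrix.conjTranspose_zero, Matrix.mul_zero]

lemma eq_zero_of_trace_pairing {X : Matrix (Fin D) (Fin D) ℂ}
    (h : ∀ B : Matrix (Fin D) (Fin D) ℂ, (Xᴴ * B).trace = 0) : X = 0 :=
  frob_zero (h X)

lemma psd_mul_trace_nonneg {A B : Matrix (Fin D) (Fin D) ℂ} (hA : A.PosSemidef)
    (hB : B.PosSemidef) : 0 ≤ (A * B).trace := by
  obtain ⟨X, rfl⟩ := psd_factor hA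
  rw [Matrix.mul_assoc, Matrix.trace_mul_comm]
  exact trace_nonneg_of_psd (hB.mul_mul_conjTranspose_same X)

lemma psd_mul_posdef_trace_zero {A B : Matrix (Fin D) (Fin D) ℂ} (hA : A.PosSemidef)
    (hB : B.PosDef) (h : (A * B).trace = 0) : A = 0 := by
  obtain ⟨X, rfl⟩ := psd_factor hA
  rw [Matrix.mul_assoc, Matrix.trace_mul_comm] at h
  have h0 : X * B * Xᴴ = 0 :=
    psd_trace_zero (hB.posSemidef.mul_mul_conjTranspose_same X) h
  obtain ⟨S, hSS, hSh⟩ := psd_sqrt_aux hB.posSemidef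
  have hSX : S * Xᴴ = 0 := by
    have : (S * Xᴴ)ᴴ * (S * Xᴴ) = 0 := by
      rw [Matrix.conjTranspose_mul, Matrix.conjTranspose_conjTranspose, hSh]
      calc X * S * (S * Xᴴ) = X * B * Xᴴ := by
            rw [Matrix.mul_assoc, ← Matrix.mul_assoc S, hSS, ← Matrix.mul_assoc]
        _ = 0 := h0
    exact Matrix.conjTranspose_mul_self_eq_zero.mp this
  have hBX : B * Xᴴ = 0 := by rw [← hSS, Matrix.mul_assoc, hSX, Matrix.mul_zero]
  have hXh : Xᴴ = 0 := by
    have hu := hB.isUnit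
    calc Xᴴ = B⁻¹ * (B * Xᴴ) := by
          rw [← Matrix.mul_assoc,
            Matrix.nonsing_inv_mul _ ((Matrix.isUnit_iff_isUnit_det B).mp hu), Matrix.one_mul]
      _ = 0 := by rw [hBX, Matrix.mul_zero]
  rw [hXh, Matrix.zero_mul]

lemma herm_decomp {A : Matrix (Fin D) (Fin D) ℂ} (hA : A.IsHermitian) :
    ∃ P Q : Matrix (Fin D) (Fin D) ℂ, P.PosSemidef ∧ Q.PosSemidef ∧ A = P - Q := by
  set U : Matrix (Fin D) (Fin D) ℂ := (hA.eigenvectorUnitary : Matrix (Fin D) (Fin D) ℂ) with hU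
  refine ⟨U * Matrix.diagonal (fun i => ((max (hA.eigenvalues i) 0 : ℝ) : ℂ)) * Uᴴ,
          U * Matrix.diagonal (fun i => ((max (-hA.eigenvalues i) 0 : ℝ) : ℂ)) * Uᴴ,
          ?_, ?_, ?_⟩
  · exact (Matrix.posSemidef_diagonal_iff.mpr fun i =>
      (by exact_mod_cast le_max_right _ _)).mul_mul_conjTranspose_same U
  · exact (Matrix.posSemidef_diagonal_iff.mpr fun i =>
      (by exact_mod_cast le_max_right _ _)).mul_mul_conjTranspose_same U
  · have hspec := hA.spectral_theorem
    rw [← Matrix.sub_mul, ← Matrix.mul_sub]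
    have hfun : (fun i => ((max (hA.eigenvalues i) 0 : ℝ) : ℂ)
          - ((max (-hA.eigenvalues i) 0 : ℝ) : ℂ))
        = (RCLike.ofReal ∘ hA.eigenvalues : Fin D → ℂ) := by
      funext i
      rw [← Complex.ofReal_sub]
      simp only [Function.comp]
      norm_cast
      rcases le_total (hA.eigenvalues i) 0 with h | h
      · simp [max_eq_right h, max_eq_left (neg_nonneg.mpr h)]
      · simp [max_eq_left h, max_eq_right (neg_nonpos.mpr h)]
    rw [Matrix.diagonal_sub, hfun, hU, ← Matrix.star_eq_conjTranspose]
    exact hspec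

lemma phi_herm (φ : Matrix (Fin D) (Fin D) ℂ →ₗ[ℂ] Matrix (Fin D) (Fin D) ℂ)
    (hpos : ∀ M : Matrix (Fin D) (Fin D) ℂ, M.PosSemidef → (φ M).PosSemidef)
    {A : Matrix (Fin D) (Fin D) ℂ} (hA : A.IsHermitian) : (φ A).IsHermitian := by
  obtain ⟨P, Q, hP, hQ, rfl⟩ := herm_decomp hA
  rw [map_sub]
  exact ((hpos P hP).isHermitian).sub ((hpos Q hQ).isHermitian)

lemma phi_conj (φ : Matrix (Fin D) (Fin D) ℂ →ₗ[ℂ] Matrix (Fin D) (Fin D) ℂ)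
    (hpos : ∀ M : Matrix (Fin D) (Fin D) ℂ, M.PosSemidef → (φ M).PosSemidef)
    (B : Matrix (Fin D) (Fin D) ℂ) : φ Bᴴ = (φ B)ᴴ := by
  set H1 := B + Bᴴ with hH1
  set H2 := (Complex.I : ℂ) • (B - Bᴴ) with hH2
  have hH1h : H1.IsHermitian := by
    rw [Matrix.IsHermitian, hH1, Matrix.conjTranspose_add, Matrix.conjTranspose_conjTranspose,
      add_comm]
  have hH2h : H2.IsHermitian := by
    rw [Matrix.IsHermitian, hH2, Matrix.conjTranspose_smul, Matrix.conjTranspose_sub,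
      Matrix.conjTranspose_conjTranspose]
    simp only [Complex.star_def, Complex.conj_I, neg_smul, smul_sub]
    module
  have hB : B = (1/2 : ℂ) • H1 + (-(Complex.I)/2 : ℂ) • H2 := by
    rw [hH1, hH2, smul_smul]
    rw [show (-(Complex.I)/2 : ℂ) * Complex.I = 1/2 by
      rw [div_mul_eq_mul_div, neg_mul, Complex.I_mul_I]; norm_num]
    rw [smul_add, smul_sub]
    module
  have hBh : Bᴴ = (1/2 : ℂ) • H1 + ((Complex.I)/2 : ℂ) • H2 := by
    rw [hH1, hH2, smul_smul]
    rw [show ((Complex.I)/2 : ℂ) * Complex.I = -(1/2) by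
      rw [div_mul_eq_mul_div, Complex.I_mul_I]; norm_num]
    rw [smul_add, smul_sub]
    module
  rw [hBh]
  conv_rhs => rw [hB]
  simp only [map_add, _root_.map_smul]
  rw [Matrix.conjTranspose_add,
    Matrix.conjTranspose_smul, Matrix.conjTranspose_smul,
    (phi_herm φ hpos hH1h).eq, (phi_herm φ hpos hH2h).eq]
  congr 1
  · congr 1
    simp
  · congr 1
    simp [Complex.star_def]

lemma vecMulVec_psd (v : Fin D → ℂ) : (Matrix.vecMulVec v (star v)).PosSemidef := by
  have hstar : ∀ y : Fin D → ℂ, star (star v ⬝ᵥ y) = star y ⬝ᵥ v := by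
    intro y
    simp only [dotProduct, star_sum, star_mul', star_star, Pi.star_apply]
    exact Finset.sum_congr rfl fun x _ => mul_comm _ _
  refine posSemidef_iff_dotProduct_mulVec.mpr ⟨?_, ?_⟩
  · rw [Matrix.IsHermitian]
    ext i j
    simp [Matrix.vecMulVec_apply, Matrix.conjTranspose_apply, mul_comm]
  · intro y
    have hmv : (Matrix.vecMulVec v (star v)) *ᵥ y = (star v ⬝ᵥ y) • v := by
      funext i
      simp only [Matrix.mulVec, Matrix.vecMulVec_apply, dotProduct, Pi.smul_apply,
        smul_eq_mul, Finset.sum_mul, Pi.star_apply]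
      exact Finset.sum_congr rfl fun x _ => by ring
    rw [hmv, dotProduct_smul, smul_eq_mul, ← hstar y]
    exact mul_star_self_nonneg _

lemma trace_pairing_vec (Y : Matrix (Fin D) (Fin D) ℂ) (v : Fin D → ℂ) :
    (Yᴴ * Matrix.vecMulVec v (star v)).trace = star v ⬝ᵥ (Yᴴ *ᵥ v) := by
  simp only [Matrix.trace, Matrix.diag, Matrix.mul_apply, Matrix.vecMulVec_apply,
    dotProduct, Matrix.mulVec, Pi.star_apply, Finset.mul_sum]
  exact Finset.sum_congr rfl fun i _ => Finset.sum_congr rfl fun j _ => by ring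

lemma vecMulVec_eq_zero {v : Fin D → ℂ} (h : Matrix.vecMulVec v (star v) = 0) : v = 0 := by
  funext i
  have := congrFun (congrFun h i) i
  simp only [Matrix.vecMulVec_apply, Pi.star_apply, Matrix.zero_apply] at this
  rcases mul_eq_zero.mp this with h' | h'
  · exact h'
  · simpa using congrArg star h'

lemma phis_herm (φ φs : Matrix (Fin D) (Fin D) ℂ →ₗ[ℂ] Matrix (Fin D) (Fin D) ℂ)
    (hadj : ∀ A B : Matrix (Fin D) (Fin D) ℂ, (Aᴴ * φ B).trace = ((φs A)ᴴ * B).trace)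
    (hpos : ∀ M : Matrix (Fin D) (Fin D) ℂ, M.PosSemidef → (φ M).PosSemidef)
    {A : Matrix (Fin D) (Fin D) ℂ} (hA : A.IsHermitian) : (φs A).IsHermitian := by
  have key : φs A - (φs A)ᴴ = 0 := by
    apply eq_zero_of_trace_pairing
    intro B
    rw [Matrix.conjTranspose_sub, Matrix.conjTranspose_conjTranspose, Matrix.sub_mul,
      Matrix.trace_sub]
    have t1 : ((φs A)ᴴ * B).trace = (Aᴴ * φ B).trace := (hadj A B).symm
    have t2 : ((φs A) * B).trace = (Aᴴ * φ B).trace := by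
      have e1 : ((φs A) * B).trace = star ((((φs A)) * B)ᴴ).trace := by
        rw [Matrix.trace_conjTranspose, star_star]
      rw [e1, Matrix.conjTranspose_mul, Matrix.trace_mul_comm, ← hadj A Bᴴ,
        phi_conj φ hpos B]
      have e2 : (Aᴴ * (φ B)ᴴ).trace = ((φ B * A)ᴴ).trace := by
        rw [Matrix.conjTranspose_mul]
      rw [e2, Matrix.trace_conjTranspose, star_star, Matrix.trace_mul_comm, hA.eq]
    rw [t1, t2, sub_self]
  have := sub_eq_zero.mp key
  exact this.symm

lemma phis_psd (φ φs : Matrix (Fin D) (Fin D) ℂ →ₗ[ℂ] Matrix (Fin D) (Fin D) ℂ)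
    (hadj : ∀ A B : Matrix (Fin D) (Fin D) ℂ, (Aᴴ * φ B).trace = ((φs A)ᴴ * B).trace)
    (hpos : ∀ M : Matrix (Fin D) (Fin D) ℂ, M.PosSemidef → (φ M).PosSemidef)
    {A : Matrix (Fin D) (Fin D) ℂ} (hA : A.PosSemidef) : (φs A).PosSemidef := by
  have hherm := phis_herm φ φs hadj hpos hA.isHermitian
  refine posSemidef_iff_dotProduct_mulVec.mpr ⟨hherm, fun v => ?_⟩
  have hpair := trace_pairing_vec (φs A) v
  rw [← hherm.eq]
  rw [← hpair, ← hadj A (Matrix.vecMulVec v (star v)), hA.isHermitian.eq]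
  exact psd_mul_trace_nonneg hA (hpos _ (vecMulVec_psd v))

lemma phi_posdef (φ φs : Matrix (Fin D) (Fin D) ℂ →ₗ[ℂ] Matrix (Fin D) (Fin D) ℂ)
    (hadj : ∀ A B : Matrix (Fin D) (Fin D) ℂ, (Aᴴ * φ B).trace = ((φs A)ᴴ * B).trace)
    (hpos : ∀ M : Matrix (Fin D) (Fin D) ℂ, M.PosSemidef → (φ M).PosSemidef)
    (hkers : ∀ M : Matrix (Fin D) (Fin D) ℂ, M.PosSemidef → φs M = 0 → M = 0)
    {P : Matrix (Fin D) (Fin D) ℂ} (hP : P.PosDef) : (φ P).PosDef := by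
  have hφP : (φ P).PosSemidef := hpos P hP.posSemidef
  refine posDef_iff_dotProduct_mulVec.mpr ⟨hφP.isHermitian, fun x hx => ?_⟩
  rcases lt_or_eq_of_le (hφP.dotProduct_mulVec_nonneg x) with h | h
  · exact h
  exfalso
  set N := Matrix.vecMulVec x (star x) with hN
  have hNpsd := vecMulVec_psd x
  have htr : (Nᴴ * φ P).trace = 0 := by
    rw [hNpsd.isHermitian.eq, Matrix.trace_mul_comm]
    have := trace_pairing_vec ((φ P)ᴴ) x
    rw [Matrix.conjTranspose_conjTranspose] at this
    rw [this]
    exact h.symm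
  have htr2 : ((φs N)ᴴ * P).trace = 0 := by rw [← hadj N P, htr]
  have hφsN : (φs N).PosSemidef := phis_psd φ φs hadj hpos hNpsd
  have : φs N = 0 := by
    apply psd_mul_posdef_trace_zero hφsN hP
    rw [← hφsN.isHermitian.eq]
    exact htr2
  have hN0 : N = 0 := hkers N hNpsd this
  exact hx (vecMulVec_eq_zero hN0)

theorem stmt11 {D : ℕ}
    (φ φs φ' : Matrix (Fin D) (Fin D) ℂ →ₗ[ℂ] Matrix (Fin D) (Fin D) ℂ)
    (hadj : ∀ A B : Matrix (Fin D) (Fin D) ℂ, (Aᴴ * φ B).trace = ((φs A)ᴴ * B).trace)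
    (hpos : ∀ M : Matrix (Fin D) (Fin D) ℂ, M.PosSemidef → (φ M).PosSemidef)
    (hker : ∀ M : Matrix (Fin D) (Fin D) ℂ, M.PosSemidef → φ M = 0 → M = 0)
    (hkers : ∀ M : Matrix (Fin D) (Fin D) ℂ, M.PosSemidef → φs M = 0 → M = 0)
    (hstrict : ∀ M : Matrix (Fin D) (Fin D) ℂ, M.PosSemidef → M ≠ 0 → (φ' M).PosDef) :
    (∀ M : Matrix (Fin D) (Fin D) ℂ, M.PosSemidef → M ≠ 0 → ((φ.comp φ') M).PosDef) ∧
    (∀ M : Matrix (Fin D) (Fin D) ℂ, M.PosSemidef → M ≠ 0 → ((φ'.comp φ) M).PosDef) := by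
  constructor
  · intro M hM hne
    rw [LinearMap.comp_apply]
    exact phi_posdef φ φs hadj hpos hkers (hstrict M hM hne)
  · intro M hM hne
    rw [LinearMap.comp_apply]
    exact hstrict (φ M) (hpos M hM) (fun h => hne (hker M hM h))
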